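/- Let w, h be real numbers with w > 1 and h > 1, and let f(θ) = (w − sin θ)·(h − cos θ). The set of points θ in the open interval (0, π/2) at which f attains a local maximum has at most 3 elements. -/

import Mathlib

open Real

open Polynomial in
theorem quartic_fin_aux (w h : ℝ) (hw : 1 < w) :
    {t : ℝ | (w^2-1)*t^4 - 2*w*h*t^3 + (w^2+h^2+2)*t^2 - 2*w*h*t + (h^2-1) = 0}.Finite ∧
    {t : ℝ | (w^2-1)*t^4 - 2*w*h*t^3 + (w^2+h^2+2)*t^2 - 2*w*h*t + (h^2-1) = 0}.ncard ≤ 4 := by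
  set p : ℝ[X] := C (w^2-1) * X^4 + C (-(2*w*h)) * X^3 + C (w^2+h^2+2) * X^2 + C (-(2*w*h)) * X + C (h^2-1) with hp
  have hlc : w^2 - 1 ≠ 0 := by nlinarith
  have hdeg : p.natDegree = 4 := by rw [hp]; compute_degree!
  have hp0 : p ≠ 0 := by
    intro h0
    rw [h0, natDegree_zero] at hdeg
    exact absurd hdeg (by norm_num)
  have heval : ∀ t : ℝ, p.eval t = (w^2-1)*t^4 - 2*w*h*t^3 + (w^2+h^2+2)*t^2 - 2*w*h*t + (h^2-1) := by
    intro t; rw [hp]; simp; ring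
  have hset : {t : ℝ | (w^2-1)*t^4 - 2*w*h*t^3 + (w^2+h^2+2)*t^2 - 2*w*h*t + (h^2-1) = 0}
      = ↑p.roots.toFinset := by
    ext t
    rw [Finset.mem_coe, Multiset.mem_toFinset, mem_roots hp0, IsRoot, heval]
    rfl
  rw [hset]
  refine ⟨(p.roots.toFinset : Finset ℝ).finite_toSet, ?_⟩
  rw [Set.ncard_coe_finset]
  calc p.roots.toFinset.card ≤ Multiset.card p.roots := p.roots.toFinset_card_le
    _ ≤ p.natDegree := p.card_roots'
    _ = 4 := hdeg

theorem tan_root_aux (w h : ℝ) (θ : ℝ) (hθ : θ ∈ Set.Ioo (0:ℝ) (π/2))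
    (hg : -Real.cos θ * (h - Real.cos θ) + (w - Real.sin θ) * Real.sin θ = 0) :
    (w^2-1)*(Real.tan θ)^4 - 2*w*h*(Real.tan θ)^3 + (w^2+h^2+2)*(Real.tan θ)^2
      - 2*w*h*(Real.tan θ) + (h^2-1) = 0 := by
  have hc : 0 < Real.cos θ := Real.cos_pos_of_mem_Ioo ⟨by linarith [hθ.1, Real.pi_pos], hθ.2⟩
  have hpyth : Real.sin θ ^ 2 + Real.cos θ ^ 2 = 1 := Real.sin_sq_add_cos_sq θ
  have h1 : Real.tan θ * Real.cos θ = Real.sin θ := Real.tan_mul_cos hc.ne'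
  set t := Real.tan θ
  set s := Real.sin θ
  set c := Real.cos θ
  have main : ((w^2-1)*t^4 - 2*w*h*t^3 + (w^2+h^2+2)*t^2 - 2*w*h*t + (h^2-1)) * c^4 = 0 := by
    linear_combination ((w*t*c - h*c)^2*(t*c+s) + ((w*t*c-h*c) + (t^2*c^2-c^2))*(w - t*c - s)) * h1
      + (w*t*c - h*c)^2 * hpyth + ((w*t*c-h*c) + (t^2*c^2-c^2)) * hg
  have hc4 : c^4 ≠ 0 := by positivity
  exact (mul_eq_zero.mp main).resolve_right hc4

theorem stmt_6 (w h : ℝ) (hw : 1 < w) (hh : 1 < h) :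
    {θ : ℝ | θ ∈ Set.Ioo (0 : ℝ) (Real.pi / 2) ∧
      IsLocalMax (fun θ : ℝ => (w - Real.sin θ) * (h - Real.cos θ)) θ}.Finite ∧
    {θ : ℝ | θ ∈ Set.Ioo (0 : ℝ) (Real.pi / 2) ∧
      IsLocalMax (fun θ : ℝ => (w - Real.sin θ) * (h - Real.cos θ)) θ}.ncard ≤ 3 := by
  set f : ℝ → ℝ := fun θ : ℝ => (w - Real.sin θ) * (h - Real.cos θ) with hf
  set g : ℝ → ℝ := fun θ : ℝ => -Real.cos θ * (h - Real.cos θ) + (w - Real.sin θ) * Real.sin θ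
    with hgdef
  have hderiv : ∀ θ : ℝ, HasDerivAt f (g θ) θ := by
    intro θ
    have := ((Real.hasDerivAt_sin θ).const_sub w).mul ((Real.hasDerivAt_cos θ).const_sub h)
    exact this.congr_deriv (by simp only [hgdef]; ring)
  have hgcont : Continuous g := by
    rw [hgdef]; continuity
  have hfcont : Continuous f := by
    rw [hf]; continuity
  set S := {θ : ℝ | θ ∈ Set.Ioo (0 : ℝ) (Real.pi / 2) ∧ IsLocalMax f θ} with hSdef
  set Z := {θ : ℝ | θ ∈ Set.Ioo (0 : ℝ) (Real.pi / 2) ∧ g θ = 0} with hZdef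
  have hSZ : S ⊆ Z := by
    rintro θ ⟨hmem, hmax⟩
    exact ⟨hmem, hmax.hasDerivAt_eq_zero (hderiv θ)⟩
  obtain ⟨hQfin, hQ4⟩ := quartic_fin_aux w h hw
  set Q := {t : ℝ | (w^2-1)*t^4 - 2*w*h*t^3 + (w^2+h^2+2)*t^2 - 2*w*h*t + (h^2-1) = 0}
  have hIooSub : Set.Ioo (0:ℝ) (π/2) ⊆ Set.Ioo (-(π/2)) (π/2) := by
    intro x hx
    exact ⟨by linarith [hx.1, Real.pi_pos], hx.2⟩
  have hinj : Set.InjOn Real.tan Z := by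
    apply Real.injOn_tan.mono
    intro x hx
    exact hIooSub hx.1
  have himg : Real.tan '' Z ⊆ Q := by
    rintro _ ⟨θ, ⟨hθ, hgθ⟩, rfl⟩
    exact tan_root_aux w h θ hθ hgθ
  have hZfin : Z.Finite := Set.Finite.of_finite_image (hQfin.subset himg) hinj
  have hZ4 : Z.ncard ≤ 4 := by
    rw [← Set.ncard_image_of_injOn hinj]
    exact le_trans (Set.ncard_le_ncard himg hQfin) hQ4
  have hSfin : S.Finite := hZfin.subset hSZ
  refine ⟨hSfin, ?_⟩
  by_contra hgt
  push_neg at hgt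
  have hS4 : 4 ≤ S.ncard := hgt
  have hSle : S.ncard ≤ Z.ncard := Set.ncard_le_ncard hSZ hZfin
  have hSeqZ : S = Z := Set.eq_of_subset_of_ncard_le hSZ (by omega) hZfin
  -- extract two "adjacent in Z" points a < b, both local maxima
  set F := hSfin.toFinset with hFdef
  have hFcard : F.card = S.ncard := (Set.ncard_eq_toFinset_card S hSfin).symm
  have hFne : F.Nonempty := by
    rw [← Finset.card_pos, hFcard]; omega
  set a := F.min' hFne with hadef
  have haF : a ∈ F := F.min'_mem hFne
  have haS : a ∈ S := hSfin.mem_toFinset.mp haF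
  have hF'ne : (F.erase a).Nonempty := by
    rw [← Finset.card_pos, Finset.card_erase_of_mem haF, hFcard]; omega
  set b := (F.erase a).min' hF'ne with hbdef
  have hbF' : b ∈ F.erase a := (F.erase a).min'_mem hF'ne
  have hbS : b ∈ S := hSfin.mem_toFinset.mp (Finset.mem_of_mem_erase hbF')
  have hab : a < b :=
    lt_of_le_of_ne (F.min'_le b (Finset.mem_of_mem_erase hbF'))
      (Ne.symm (Finset.ne_of_mem_erase hbF'))
  have hnoz : ∀ x ∈ Set.Ioo a b, g x ≠ 0 := by
    intro x hx hgx
    have hxIoo : x ∈ Set.Ioo (0:ℝ) (π/2) :=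
      ⟨lt_trans haS.1.1 hx.1, lt_trans hx.2 hbS.1.2⟩
    have hxS : x ∈ S := by rw [hSeqZ]; exact ⟨hxIoo, hgx⟩
    have hxF : x ∈ F.erase a :=
      Finset.mem_erase.mpr ⟨ne_of_gt hx.1, hSfin.mem_toFinset.mpr hxS⟩
    exact absurd ((F.erase a).min'_le x hxF) (not_le.mpr hx.2)
  have hm : (a + b) / 2 ∈ Set.Ioo a b := ⟨by linarith, by linarith⟩
  have hsign : (∀ x ∈ Set.Ioo a b, 0 < g x) ∨ (∀ x ∈ Set.Ioo a b, g x < 0) := by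
    rcases lt_trichotomy (g ((a + b) / 2)) 0 with hneg | hzero | hpos
    · right
      intro x hx
      by_contra hge
      have hgx : 0 < g x := lt_of_le_of_ne (not_lt.mp hge) (Ne.symm (hnoz x hx))
      rcases lt_trichotomy x ((a + b) / 2) with hlt | heq | hgt'
      · obtain ⟨z, hz, hz0⟩ := intermediate_value_Ioo' hlt.le hgcont.continuousOn
          (Set.mem_Ioo.mpr ⟨hneg, hgx⟩)
        exact hnoz z ⟨lt_trans hx.1 hz.1, lt_trans hz.2 hm.2⟩ hz0
      · rw [heq] at hgx; linarith
      · obtain ⟨z, hz, hz0⟩ := intermediate_value_Ioo hgt'.le hgcont.continuousOn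
          (Set.mem_Ioo.mpr ⟨hneg, hgx⟩)
        exact hnoz z ⟨lt_trans hm.1 hz.1, lt_trans hz.2 hx.2⟩ hz0
    · exact absurd hzero (hnoz _ hm)
    · left
      intro x hx
      by_contra hle
      have hgx : g x < 0 := lt_of_le_of_ne (not_lt.mp hle) (hnoz x hx)
      rcases lt_trichotomy x ((a + b) / 2) with hlt | heq | hgt'
      · obtain ⟨z, hz, hz0⟩ := intermediate_value_Ioo hlt.le hgcont.continuousOn
          (Set.mem_Ioo.mpr ⟨hgx, hpos⟩)
        exact hnoz z ⟨lt_trans hx.1 hz.1, lt_trans hz.2 hm.2⟩ hz0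
      · rw [heq] at hgx; linarith
      · obtain ⟨z, hz, hz0⟩ := intermediate_value_Ioo' hgt'.le hgcont.continuousOn
          (Set.mem_Ioo.mpr ⟨hgx, hpos⟩)
        exact hnoz z ⟨lt_trans hm.1 hz.1, lt_trans hz.2 hx.2⟩ hz0
  have hderivEq : ∀ x : ℝ, deriv f x = g x := fun x => (hderiv x).deriv
  rcases hsign with hpos | hneg
  · -- f strictly increasing on [a,b], contradicting local max at a
    have hmono : StrictMonoOn f (Set.Icc a b) := by
      apply strictMonoOn_of_deriv_pos (convex_Icc a b) hfcont.continuousOn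
      intro x hx
      rw [interior_Icc] at hx
      rw [hderivEq]
      exact hpos x hx
    have hev : ∀ᶠ x in nhdsWithin a (Set.Ioi a), f x ≤ f a ∧ x ∈ Set.Ioo a b :=
      (haS.2.filter_mono nhdsWithin_le_nhds).and
        (Filter.eventually_of_mem (Ioo_mem_nhdsGT_of_mem ⟨le_refl a, hab⟩) (fun x hx => hx))
    obtain ⟨x, hfx, hxab⟩ := hev.exists
    have : f a < f x := hmono (Set.left_mem_Icc.mpr hab.le)
      ⟨hxab.1.le, hxab.2.le⟩ hxab.1
    linarith
  · -- f strictly decreasing on [a,b], contradicting local max at b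
    have hanti : StrictAntiOn f (Set.Icc a b) := by
      apply strictAntiOn_of_deriv_neg (convex_Icc a b) hfcont.continuousOn
      intro x hx
      rw [interior_Icc] at hx
      rw [hderivEq]
      exact hneg x hx
    have hev : ∀ᶠ x in nhdsWithin b (Set.Iio b), f x ≤ f b ∧ x ∈ Set.Ioo a b :=
      (hbS.2.filter_mono nhdsWithin_le_nhds).and
        (Filter.eventually_of_mem (Ioo_mem_nhdsLT_of_mem ⟨hab, le_refl b⟩) (fun x hx => hx))
    obtain ⟨x, hfx, hxab⟩ := hev.exists
    have : f b < f x := hanti ⟨hxab.1.le, hxab.2.le⟩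
      (Set.right_mem_Icc.mpr hab.le) hxab.2
    linarith
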